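/- Let 𝔄 be a finite-dimensional unital C*-algebra and N a norm on the complex vector space 𝔄 satisfying N(a*) = N(a) for all a ∈ 𝔄. Define N₀ : 𝔄 → [0,∞) by N₀(a) = inf{ N(a + λ·1) : λ ∈ ℂ }. Then: (1) N₀(a) = 0 if and only if a ∈ ℂ·1; and (2) the topology induced by ρ_{N₀} on S(𝔄) is weaker than the weak* topology, i.e., for every state ν and every ε > 0 there is a weak* open set U containing ν such that every state ν' ∈ U satisfies ρ_{N₀}(ν',ν) < ε. (Hence (𝔄, 𝔄, N₀) is a compact quantum metric space.) -/

import Mathlib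

open scoped ENNReal

noncomputable section

/-- Type synonym used to endow `A` with the norm `N`. -/
def WithNorm (A : Type*) (_N : A → ℝ) : Type _ := A

/-- In a finite-dimensional normed space, any abstract norm `N` dominates the ambient norm
up to a constant. -/
theorem exists_bound {A : Type*} [NormedAddCommGroup A] [NormedSpace ℂ A] [FiniteDimensional ℂ A]
    (N : A → ℝ)
    (hN_add : ∀ a b : A, N (a + b) ≤ N a + N b)
    (hN_smul : ∀ (c : ℂ) (a : A), N (c • a) = ‖c‖ * N a)
    (hN_zero : ∀ a : A, N a = 0 ↔ a = 0) :
    ∃ C : ℝ, 0 < C ∧ ∀ x : A, ‖x‖ ≤ C * N x := by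
  letI iacg : AddCommGroup (WithNorm A N) := inferInstanceAs (AddCommGroup A)
  letI imod : Module ℂ (WithNorm A N) := inferInstanceAs (Module ℂ A)
  have hneg : ∀ a : A, N (-a) = N a := by
    intro a
    have := hN_smul (-1) a
    simpa using this
  letI inorm : NormedAddCommGroup (WithNorm A N) :=
    AddGroupNorm.toNormedAddCommGroup
      { toFun := N
        map_zero' := (hN_zero 0).mpr rfl
        add_le' := hN_add
        neg' := hneg
        eq_zero_of_map_eq_zero' := fun a ha => (hN_zero a).mp ha }
  letI ins : NormedSpace ℂ (WithNorm A N) :=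
    { norm_smul_le := fun c a => le_of_eq (hN_smul c a) }
  letI ifd : FiniteDimensional ℂ (WithNorm A N) :=
    Module.Finite.equiv (LinearEquiv.refl ℂ A : A ≃ₗ[ℂ] WithNorm A N)
  let e : WithNorm A N →ₗ[ℂ] A := LinearMap.id
  have hcont : Continuous e := e.continuous_of_finiteDimensional
  obtain ⟨C, hC, hb⟩ := SemilinearMapClass.bound_of_continuous e hcont
  exact ⟨C, hC, fun x => hb x⟩

variable {A : Type*} [CStarAlgebra A]

/-- A state on a unital C*-algebra `A`, viewed as an element of the weak* dual: a continuous
linear functional sending the unit to `1` and taking nonnegative real values on positive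
elements `star a * a`. -/
def IsState (φ : WeakDual ℂ A) : Prop :=
  φ 1 = 1 ∧ ∀ a : A, 0 ≤ (φ (star a * a)).re ∧ (φ (star a * a)).im = 0

/-- The semi metric `ρ_L` on the state space of `A` associated with `L : A → ℝ`:
`ρ_L(μ, ν) = sup { |μ a - ν a| : a ∈ A, L a ≤ 1 }`, valued in `[0, ∞]`. -/
def rhoL (L : A → ℝ) (μ ν : WeakDual ℂ A) : ℝ≥0∞ :=
  ⨆ a ∈ {a : A | L a ≤ 1}, (‖μ a - ν a‖₊ : ℝ≥0∞)

/-- The seminorm `N₀` obtained from a norm `N` by taking the quotient modulo the scalars: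
`N₀ a = inf { N (a + λ·1) : λ ∈ ℂ }`. -/
def Nzero (N : A → ℝ) (a : A) : ℝ :=
  ⨅ c : ℂ, N (a + c • (1 : A))

/-- Example 3 of the paper.  Let `A` be a finite-dimensional unital
C*-algebra and `N` a norm on the complex vector space `A` with `N (star a) = N a`.  Let
`N₀ a = inf { N (a + λ·1) : λ ∈ ℂ }`.  Then (1) `N₀ a = 0` iff `a ∈ ℂ·1`, and (2) the
topology induced by `ρ_{N₀}` on the state space of `A` is weaker than the weak* topology;
hence `(A, A, N₀)` is a compact quantum metric space. -/
theorem finiteDimensional_quantum_metric [FiniteDimensional ℂ A] (N : A → ℝ)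
    (hN_add : ∀ a b : A, N (a + b) ≤ N a + N b)
    (hN_smul : ∀ (c : ℂ) (a : A), N (c • a) = ‖c‖ * N a)
    (hN_zero : ∀ a : A, N a = 0 ↔ a = 0)
    (hN_star : ∀ a : A, N (star a) = N a) :
    (∀ a : A, Nzero N a = 0 ↔ ∃ c : ℂ, a = c • (1 : A)) ∧
      (∀ ν : WeakDual ℂ A, IsState ν → ∀ ε : ℝ, 0 < ε →
        ∃ U : Set (WeakDual ℂ A), IsOpen U ∧ ν ∈ U ∧
          ∀ ν' ∈ U, IsState ν' → rhoL (Nzero N) ν' ν < ENNReal.ofReal ε) := by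
  obtain ⟨C, hC, hCb⟩ := exists_bound N hN_add hN_smul hN_zero
  have hN0 : ∀ a : A, 0 ≤ N a := by
    intro a
    have h1 := hN_add a (-a)
    have h2 : N (-a) = N a := by simpa using hN_smul (-1) a
    have h3 : N (0 : A) = 0 := (hN_zero 0).mpr rfl
    simp only [add_neg_cancel, h3, h2] at h1
    linarith
  have hbdd : ∀ a : A, BddBelow (Set.range fun c : ℂ => N (a + c • (1 : A))) := by
    intro a
    refine ⟨0, ?_⟩
    rintro x ⟨c, rfl⟩
    exact hN0 _
  constructor
  · intro a
    constructor
    · intro h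
      have hmem : a ∈ Submodule.span ℂ ({(1 : A)} : Set A) := by
        have hclosed : IsClosed (Submodule.span ℂ ({(1 : A)} : Set A) : Set A) :=
          Submodule.closed_of_finiteDimensional _
        rw [← SetLike.mem_coe, ← hclosed.closure_eq, Metric.mem_closure_iff]
        intro ε hε
        have hlt : (⨅ c : ℂ, N (a + c • (1 : A))) < ε / C := by
          rw [show (⨅ c : ℂ, N (a + c • (1 : A))) = Nzero N a from rfl, h]
          positivity
        obtain ⟨c, hc⟩ := exists_lt_of_ciInf_lt hlt
        refine ⟨(-c) • (1 : A), Submodule.smul_mem _ _ (Submodule.mem_span_singleton_self _), ?_⟩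
        have : ‖a + c • (1 : A)‖ ≤ C * N (a + c • (1 : A)) := hCb _
        have h2 : ‖a + c • (1 : A)‖ < ε := by
          calc ‖a + c • (1 : A)‖ ≤ C * N (a + c • (1 : A)) := hCb _
            _ < C * (ε / C) := by exact (mul_lt_mul_iff_right₀ hC).mpr hc
            _ = ε := by field_simp
        rw [dist_eq_norm]
        simpa [sub_eq_add_neg, neg_smul] using h2
      obtain ⟨c, hc⟩ := Submodule.mem_span_singleton.mp hmem
      exact ⟨c, hc.symm⟩
    · rintro ⟨c, rfl⟩
      refine le_antisymm ?_ (Real.iInf_nonneg fun c => hN0 _)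
      have := ciInf_le (hbdd (c • (1 : A))) (-c)
      simpa [Nzero, neg_smul, (hN_zero 0).mpr rfl] using this
  · -- part 2
    have hfd : FiniteDimensional ℂ (WeakDual ℂ A) :=
      Module.Finite.equiv (WeakDual.toStrongDual (𝕜 := ℂ) (E := A)).symm
    have hcont : Continuous (WeakDual.toStrongDual : WeakDual ℂ A → StrongDual ℂ A) :=
      LinearMap.continuous_of_finiteDimensional
        (WeakDual.toStrongDual (𝕜 := ℂ) (E := A)).toLinearMap
    intro ν hν ε hε
    set δ : ℝ := ε / (4 * C) with hδdef
    have hδ : 0 < δ := by positivity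
    refine ⟨(WeakDual.toStrongDual : WeakDual ℂ A → StrongDual ℂ A) ⁻¹'
      Metric.ball (WeakDual.toStrongDual ν) δ,
      hcont.isOpen_preimage _ Metric.isOpen_ball,
      Set.mem_preimage.mpr (Metric.mem_ball_self hδ), ?_⟩
    intro ν' hν'U hν'
    have hdist : ‖WeakDual.toStrongDual ν' - WeakDual.toStrongDual ν‖ < δ := by
      have := hν'U
      simp only [Set.mem_preimage, Metric.mem_ball, dist_eq_norm] at this
      exact this
    set g : StrongDual ℂ A := WeakDual.toStrongDual ν' - WeakDual.toStrongDual ν with hg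
    have hkey : ∀ a : A, Nzero N a ≤ 1 → ‖ν' a - ν a‖ ≤ ε / 2 := by
      intro a ha
      have hlt : (⨅ c : ℂ, N (a + c • (1 : A))) < 2 := lt_of_le_of_lt ha one_lt_two
      obtain ⟨c, hc⟩ := exists_lt_of_ciInf_lt hlt
      set b : A := a + c • (1 : A) with hb
      have hg1 : g (1 : A) = 0 := by
        simp [hg, hν.1, hν'.1]
      have hga : g a = ν' a - ν a := by
        simp [hg]
      have hgb : g b = g a := by
        simp [hb, map_add, hg1]
      have hnb : ‖b‖ ≤ 2 * C := by
        calc ‖b‖ ≤ C * N b := hCb _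
          _ ≤ C * 2 := by nlinarith
          _ = 2 * C := by ring
      have : ‖g b‖ ≤ δ * (2 * C) :=
        le_trans (g.le_opNorm b) (mul_le_mul hdist.le hnb (norm_nonneg _) hδ.le)
      rw [hgb, hga] at this
      calc ‖ν' a - ν a‖ ≤ δ * (2 * C) := this
        _ = ε / 2 := by rw [hδdef, div_mul_eq_mul_div, div_eq_div_iff (by positivity) two_ne_zero]; ring
    have hsup : rhoL (Nzero N) ν' ν ≤ ENNReal.ofReal (ε / 2) := by
      refine iSup₂_le ?_
      intro a ha
      rw [← ENNReal.ofReal_coe_nnreal, coe_nnnorm]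
      exact ENNReal.ofReal_le_ofReal (hkey a ha)
    exact lt_of_le_of_lt hsup (by
      rw [ENNReal.ofReal_lt_ofReal_iff hε]
      linarith)

end
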